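/- arXiv:2110.09275 — 5 statements merged into one kernel-verified Lean document; each statement's English description precedes it below -/
import Mathlib

section
/- Let (Ω, 𝒜, P) be a probability space, X : Ω → ℝ^k, Y : Ω → ℝ Borel-measurable random variables and R : Ω → {0,1} a measurable indicator. Suppose (i) Y and R are conditionally independent given the σ-algebra σ(X) generated by X (unconfoundedness), and (ii) f : ℝ^k → ℝ is Borel-measurable and f ∘ X is a version of the conditional expectation E[1{R=1} | σ(X)] (f is the true propensity score). Then for every Borel-measurable function h : ℝ^k → ℝ, the random variables Y and R are conditionally independent given the σ-algebra σ(f∘X, h∘X) generated by the pair (f(X), h(X)). -/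
open MeasureTheory ProbabilityTheory

/-- **Propensity-score half of Lemma 1 (double robustness of Double Score Matching)**:
if `Y` and the sample-membership indicator `R` are conditionally independent given
`σ(X)` (unconfoundedness), and `f ∘ X` is a version of the conditional expectation
`E[1{R = 1} | σ(X)]` (i.e. `f` is the true propensity score), then for every Borel
function `h`, `Y` and `R` are conditionally independent given `σ(f(X), h(X))`. -/
theorem condIndepFun_given_propensity_score_and_arbitrary_function
    {Ω : Type*} {mΩ : MeasurableSpace Ω} [StandardBorelSpace Ω] [Nonempty Ω]
    (μ : Measure Ω) [IsProbabilityMeasure μ]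
    {k : ℕ} (X : Ω → (Fin k → ℝ)) (Y : Ω → ℝ) (R : Ω → ℝ)
    (hX : Measurable X) (hY : Measurable Y) (hR : Measurable R)
    (hR01 : ∀ ω, R ω = 0 ∨ R ω = 1)
    (hunconf : CondIndepFun (MeasurableSpace.comap X inferInstance) hX.comap_le Y R μ)
    (f : (Fin k → ℝ) → ℝ) (hf : Measurable f)
    (hprop : (fun ω => f (X ω)) =ᵐ[μ]
      μ[Set.indicator {ω | R ω = 1} (fun _ => (1 : ℝ)) |
        MeasurableSpace.comap X inferInstance])
    (h : (Fin k → ℝ) → ℝ) (hh : Measurable h) :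
    CondIndepFun (MeasurableSpace.comap (fun ω => (f (X ω), h (X ω))) inferInstance)
      (((hf.comp hX).prodMk (hh.comp hX)).comap_le) Y R μ := by
  have hm₁ : MeasurableSpace.comap X inferInstance ≤ mΩ := hX.comap_le
  have h𝒢mΩ : MeasurableSpace.comap (fun ω => (f (X ω), h (X ω))) inferInstance ≤ mΩ :=
    ((hf.comp hX).prodMk (hh.comp hX)).comap_le
  have h𝒢m₁ : MeasurableSpace.comap (fun ω => (f (X ω), h (X ω))) inferInstance
      ≤ MeasurableSpace.comap X inferInstance := by
    rw [show (fun ω => (f (X ω), h (X ω))) = (fun x => (f x, h x)) ∘ X from rfl,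
      ← MeasurableSpace.comap_comp]
    exact MeasurableSpace.comap_mono (hf.prodMk hh).comap_le
  -- `f ∘ X` is `𝒢`-strongly measurable
  have hpairm : Measurable[MeasurableSpace.comap (fun ω => (f (X ω), h (X ω))) inferInstance]
      (fun ω => (f (X ω), h (X ω))) := Measurable.of_comap_le le_rfl
  have hfX𝒢 : StronglyMeasurable[MeasurableSpace.comap
        (fun ω => (f (X ω), h (X ω))) inferInstance] (fun ω => f (X ω)) :=
    (measurable_fst.comp hpairm).stronglyMeasurable
  -- the set `{R = 1}` and its indicator
  have hBmeas : MeasurableSet[mΩ] {ω | R ω = 1} := hR (measurableSet_singleton (1 : ℝ))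
  have hBpre : R ⁻¹' {(1 : ℝ)} = {ω | R ω = 1} := rfl
  have hind_int : Integrable (Set.indicator {ω | R ω = 1} (fun _ => (1 : ℝ))) μ :=
    (integrable_const (1 : ℝ)).indicator hBmeas
  -- `f ∘ X` is integrable and a.e. in `[0, 1]`
  have hfX_int : Integrable (fun ω => f (X ω)) μ :=
    integrable_condExp.congr hprop.symm
  have hfX_bd : ∀ᵐ ω ∂μ, ‖f (X ω)‖ ≤ 1 := by
    have h0 : (0 : Ω → ℝ) ≤ᵐ[μ] μ[Set.indicator {ω | R ω = 1} (fun _ => (1 : ℝ)) |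
        MeasurableSpace.comap X inferInstance] :=
      condExp_nonneg (Filter.Eventually.of_forall fun ω =>
        Set.indicator_nonneg (fun _ _ => zero_le_one) ω)
    have h1 : μ[Set.indicator {ω | R ω = 1} (fun _ => (1 : ℝ)) |
          MeasurableSpace.comap X inferInstance]
        ≤ᵐ[μ] μ[(fun _ => (1 : ℝ)) | MeasurableSpace.comap X inferInstance] :=
      condExp_mono hind_int (integrable_const (1 : ℝ))
        (Filter.Eventually.of_forall fun ω => by
          by_cases hω : ω ∈ {ω | R ω = 1} <;> simp [Set.indicator, hω])
    rw [condExp_const hm₁ (1 : ℝ)] at h1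
    filter_upwards [hprop, h0, h1] with ω he h0ω h1ω
    rw [he, Real.norm_eq_abs, abs_of_nonneg h0ω]
    exact h1ω
  -- conditional probability of `{R = 1}` given `𝒢` is `f ∘ X`
  have hcondB : (μ⟦{ω | R ω = 1} |
        MeasurableSpace.comap (fun ω => (f (X ω), h (X ω))) inferInstance⟧)
      =ᵐ[μ] fun ω => f (X ω) := by
    have ht := condExp_condExp_of_le (μ := μ)
      (f := Set.indicator {ω | R ω = 1} (fun _ => (1 : ℝ))) h𝒢m₁ hm₁
    have hc : μ[μ[Set.indicator {ω | R ω = 1} (fun _ => (1 : ℝ)) |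
          MeasurableSpace.comap X inferInstance] |
          MeasurableSpace.comap (fun ω => (f (X ω), h (X ω))) inferInstance]
        =ᵐ[μ] μ[(fun ω => f (X ω)) |
          MeasurableSpace.comap (fun ω => (f (X ω), h (X ω))) inferInstance] :=
      condExp_congr_ae hprop.symm
    refine ht.symm.trans (hc.trans ?_)
    rw [condExp_of_stronglyMeasurable h𝒢mΩ hfX𝒢 hfX_int]
  -- key claim
  have key : ∀ s : Set ℝ, MeasurableSet s →
      (μ⟦Y ⁻¹' s ∩ {ω | R ω = 1} |
          MeasurableSpace.comap (fun ω => (f (X ω), h (X ω))) inferInstance⟧) =ᵐ[μ]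
        fun ω => (μ⟦Y ⁻¹' s |
          MeasurableSpace.comap (fun ω => (f (X ω), h (X ω))) inferInstance⟧) ω * f (X ω) := by
    intro s hs
    have h1 : (μ⟦Y ⁻¹' s ∩ R ⁻¹' {(1 : ℝ)} | MeasurableSpace.comap X inferInstance⟧) =ᵐ[μ]
        fun ω => (μ⟦Y ⁻¹' s | MeasurableSpace.comap X inferInstance⟧) ω *
          (μ⟦R ⁻¹' {(1 : ℝ)} | MeasurableSpace.comap X inferInstance⟧) ω :=
      (condIndepFun_iff_condExp_inter_preimage_eq_mul hY hR).mp hunconf s {1} hs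
        (measurableSet_singleton 1)
    rw [hBpre] at h1
    -- replace the inner conditional probability of `{R = 1}` by `f ∘ X`
    have h2 : (μ⟦Y ⁻¹' s ∩ {ω | R ω = 1} | MeasurableSpace.comap X inferInstance⟧) =ᵐ[μ]
        (fun ω => f (X ω)) * (μ⟦Y ⁻¹' s | MeasurableSpace.comap X inferInstance⟧) := by
      filter_upwards [h1, hprop] with ω h1ω hpω
      simp only [Pi.mul_apply]
      rw [h1ω, hpω, mul_comm]
    -- tower property
    have ht := condExp_condExp_of_le (μ := μ)
      (f := Set.indicator (Y ⁻¹' s ∩ {ω | R ω = 1}) (fun _ => (1 : ℝ))) h𝒢m₁ hm₁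
    have hc : μ[μ[Set.indicator (Y ⁻¹' s ∩ {ω | R ω = 1}) (fun _ => (1 : ℝ)) |
          MeasurableSpace.comap X inferInstance] |
          MeasurableSpace.comap (fun ω => (f (X ω), h (X ω))) inferInstance]
        =ᵐ[μ] μ[(fun ω => f (X ω)) *
            (μ⟦Y ⁻¹' s | MeasurableSpace.comap X inferInstance⟧) |
          MeasurableSpace.comap (fun ω => (f (X ω), h (X ω))) inferInstance] :=
      condExp_congr_ae h2
    -- pull out the `𝒢`-measurable bounded factor
    have hpull := condExp_stronglyMeasurable_mul_of_bound h𝒢mΩ hfX𝒢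
      (integrable_condExp (f := Set.indicator (Y ⁻¹' s) (fun _ => (1 : ℝ)))
        (m := MeasurableSpace.comap X inferInstance)) 1 hfX_bd
    -- tower again for the first factor
    have ht2 := condExp_condExp_of_le (μ := μ)
      (f := Set.indicator (Y ⁻¹' s) (fun _ => (1 : ℝ))) h𝒢m₁ hm₁
    refine ht.symm.trans (hc.trans (hpull.trans ?_))
    filter_upwards [ht2] with ω ht2ω
    simp only [Pi.mul_apply]
    rw [ht2ω, mul_comm]
  -- now prove the conditional independence
  rw [condIndepFun_iff_condExp_inter_preimage_eq_mul hY hR]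
  intro s t hs ht
  have hA_int : Integrable (Set.indicator (Y ⁻¹' s) (fun _ => (1 : ℝ))) μ :=
    (integrable_const (1 : ℝ)).indicator (hY hs)
  have hAB_int : Integrable
      (Set.indicator (Y ⁻¹' s ∩ {ω | R ω = 1}) (fun _ => (1 : ℝ))) μ :=
    (integrable_const (1 : ℝ)).indicator ((hY hs).inter hBmeas)
  by_cases h1t : (1 : ℝ) ∈ t <;> by_cases h0t : (0 : ℝ) ∈ t
  · -- `R ⁻¹' t = univ`
    have hpre : R ⁻¹' t = Set.univ := by
      ext ω; simp only [Set.mem_preimage, Set.mem_univ, iff_true]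
      rcases hR01 ω with h' | h' <;> rw [h'] <;> assumption
    rw [hpre, Set.inter_univ, Set.indicator_univ, condExp_const h𝒢mΩ (1 : ℝ)]
    filter_upwards with ω
    simp
  · -- `R ⁻¹' t = {R = 1}`
    have hpre : R ⁻¹' t = {ω | R ω = 1} := by
      ext ω; simp only [Set.mem_preimage, Set.mem_setOf_eq]
      constructor
      · intro hmem
        rcases hR01 ω with h' | h'
        · rw [h'] at hmem; exact absurd hmem h0t
        · exact h'
      · intro h'; rw [h']; exact h1t
    rw [hpre]
    filter_upwards [key s hs, hcondB] with ω hk hB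
    rw [hk, hB]
  · -- `R ⁻¹' t = {R = 1}ᶜ`
    have hpre : R ⁻¹' t = {ω | R ω = 1}ᶜ := by
      ext ω
      simp only [Set.mem_preimage, Set.mem_compl_iff, Set.mem_setOf_eq]
      constructor
      · intro hmem h'
        rw [h'] at hmem; exact h1t hmem
      · intro h'
        rcases hR01 ω with h'' | h''
        · rw [h'']; exact h0t
        · exact absurd h'' h'
    rw [hpre]
    -- indicator splittings
    have hsplit : Set.indicator (Y ⁻¹' s ∩ {ω | R ω = 1}ᶜ) (fun _ => (1 : ℝ))
        = Set.indicator (Y ⁻¹' s) (fun _ => (1 : ℝ))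
          - Set.indicator (Y ⁻¹' s ∩ {ω | R ω = 1}) (fun _ => (1 : ℝ)) := by
      funext ω
      by_cases hA : ω ∈ Y ⁻¹' s <;> by_cases hB : ω ∈ {ω | R ω = 1} <;>
        simp [Set.indicator, hA, hB]
    have hsplit2 : Set.indicator ({ω | R ω = 1}ᶜ) (fun _ => (1 : ℝ))
        = (fun _ => (1 : ℝ)) - Set.indicator {ω | R ω = 1} (fun _ => (1 : ℝ)) := by
      funext ω
      by_cases hB : ω ∈ {ω | R ω = 1} <;> simp [Set.indicator, hB]
    have e1 : (μ⟦Y ⁻¹' s ∩ {ω | R ω = 1}ᶜ |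
          MeasurableSpace.comap (fun ω => (f (X ω), h (X ω))) inferInstance⟧) =ᵐ[μ]
        (μ⟦Y ⁻¹' s | MeasurableSpace.comap (fun ω => (f (X ω), h (X ω))) inferInstance⟧)
        - (μ⟦Y ⁻¹' s ∩ {ω | R ω = 1} |
          MeasurableSpace.comap (fun ω => (f (X ω), h (X ω))) inferInstance⟧) := by
      rw [hsplit]; exact condExp_sub hA_int hAB_int _
    have e2 : (μ⟦({ω | R ω = 1}ᶜ : Set Ω) |
          MeasurableSpace.comap (fun ω => (f (X ω), h (X ω))) inferInstance⟧) =ᵐ[μ]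
        (fun _ => (1 : ℝ)) - (μ⟦{ω | R ω = 1} |
          MeasurableSpace.comap (fun ω => (f (X ω), h (X ω))) inferInstance⟧) := by
      rw [hsplit2]
      have := condExp_sub (μ := μ)
        (m := MeasurableSpace.comap (fun ω => (f (X ω), h (X ω))) inferInstance)
        (integrable_const (1 : ℝ)) hind_int
      rw [condExp_const h𝒢mΩ (1 : ℝ)] at this
      exact this
    filter_upwards [e1, e2, key s hs, hcondB] with ω h1ω h2ω hkω hBω
    rw [h1ω, h2ω]
    simp only [Pi.sub_apply]
    rw [hkω, hBω]
    ring
  · -- `R ⁻¹' t = ∅`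
    have hpre : R ⁻¹' t = ∅ := by
      ext ω; simp only [Set.mem_preimage, Set.mem_empty_iff_false, iff_false]
      intro hmem
      rcases hR01 ω with h' | h' <;> rw [h'] at hmem
      · exact h0t hmem
      · exact h1t hmem
    rw [hpre, Set.inter_empty]
    simp only [Set.indicator_empty, condExp_zero]
    rw [condExp_const h𝒢mΩ (0 : ℝ)]
    filter_upwards with ω
    simp
end

section
/- Let (Ω, 𝒜, P) be a probability space, X : Ω → ℝ^k, Y : Ω → ℝ Borel-measurable random variables and R : Ω → {0,1} a measurable indicator. Suppose (i) Y and R are conditionally independent given σ(X) (unconfoundedness), and (ii) g : ℝ^k → ℝ is Borel-measurable and Y and X are conditionally independent given the σ-algebra σ(g∘X) (g is a valid prognostic score in the sense of Hansen: the conditional law of Y given X depends on X only through g(X)). Then for every Borel-measurable function h : ℝ^k → ℝ, the random variables Y and R are conditionally independent given the σ-algebra σ(g∘X, h∘X). -/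
open MeasureTheory ProbabilityTheory
open scoped NNReal

/-- If `Y ⟂ X | m0` with `m0 ≤ σ(X)`, then the conditional probability of a `Y`-event
given `σ(X)` coincides a.e. with the one given `m0`. -/
private theorem auxKey {Ω β : Type*} [mβ : MeasurableSpace β] (m0 : MeasurableSpace Ω)
    {mΩ : MeasurableSpace Ω} (μ : Measure Ω) [IsProbabilityMeasure μ]
    (Y : Ω → ℝ) (X : Ω → β) (hY : Measurable Y) (hX : Measurable X)
    (hm0X : m0 ≤ MeasurableSpace.comap X mβ)
    (hprog : ∀ (s : Set ℝ) (t : Set β), MeasurableSet s → MeasurableSet t →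
        (μ⟦Y ⁻¹' s ∩ X ⁻¹' t | m0⟧) =ᵐ[μ]
          fun ω => (μ⟦Y ⁻¹' s | m0⟧) ω * (μ⟦X ⁻¹' t | m0⟧) ω)
    (A : Set ℝ) (hA : MeasurableSet A) :
    (μ⟦Y ⁻¹' A | MeasurableSpace.comap X mβ⟧) =ᵐ[μ] (μ⟦Y ⁻¹' A | m0⟧) := by
  have hXle : MeasurableSpace.comap X mβ ≤ mΩ := hX.comap_le
  have hm0le : m0 ≤ mΩ := hm0X.trans hXle
  have hYA : MeasurableSet (Y ⁻¹' A) := hY hA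
  refine (ae_eq_condExp_of_forall_setIntegral_eq hXle
    (f := (Y ⁻¹' A).indicator (fun _ => (1 : ℝ)))
    (g := μ⟦Y ⁻¹' A | m0⟧) ?_ ?_ ?_ ?_).symm
  · exact (integrable_const (1 : ℝ)).indicator hYA
  · exact fun s _ _ => integrable_condExp.integrableOn
  · rintro s ⟨B, hB, rfl⟩ -
    have hXB : MeasurableSet (X ⁻¹' B) := hX hB
    set c : Ω → ℝ := μ⟦Y ⁻¹' A | m0⟧ with hc
    set e : Ω → ℝ := (X ⁻¹' B).indicator (fun _ => (1 : ℝ)) with he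
    have he_int : Integrable e μ := (integrable_const (1 : ℝ)).indicator hXB
    have hec : Integrable (fun x => c x * e x) μ := by
      have : Integrable (fun x => e x * c x) μ := by
        refine Integrable.bdd_mul (c := 1) integrable_condExp
          he_int.aestronglyMeasurable ?_
        filter_upwards with x
        rw [he, Real.norm_eq_abs]
        by_cases hx : x ∈ X ⁻¹' B <;> simp [hx]
      simpa [mul_comm] using this
    have hpull : μ[(fun x => c x * e x) | m0] =ᵐ[μ]
        fun x => c x * (μ[e | m0]) x :=
      condExp_mul_of_stronglyMeasurable_left (μ := μ) (m := m0)
        (f := c) (g := e) stronglyMeasurable_condExp hec he_int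
    have hprogAB := hprog A B hA hB
    have h1 : ∫ x in X ⁻¹' B, c x ∂μ = ∫ x, c x * e x ∂μ := by
      rw [← integral_indicator hXB]
      congr 1
      ext x
      by_cases hx : x ∈ X ⁻¹' B <;> simp [he, hx]
    have h2 : ∫ x in X ⁻¹' B, (Y ⁻¹' A).indicator (fun _ => (1 : ℝ)) x ∂μ
        = (μ (Y ⁻¹' A ∩ X ⁻¹' B)).toReal := by
      rw [setIntegral_indicator hYA]
      simp [Set.inter_comm, Measure.restrict_apply hYA, Measure.real]
    rw [h1, h2]
    calc ∫ x, c x * e x ∂μ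
        = ∫ x, (μ[(fun x => c x * e x) | m0]) x ∂μ := (integral_condExp hm0le).symm
      _ = ∫ x, c x * (μ⟦X ⁻¹' B | m0⟧) x ∂μ := integral_congr_ae hpull
      _ = ∫ x, (μ⟦Y ⁻¹' A ∩ X ⁻¹' B | m0⟧) x ∂μ := (integral_congr_ae hprogAB).symm
      _ = ∫ x, (Y ⁻¹' A ∩ X ⁻¹' B).indicator (fun _ => (1 : ℝ)) x ∂μ :=
          integral_condExp hm0le
      _ = (μ (Y ⁻¹' A ∩ X ⁻¹' B)).toReal := by
          rw [integral_indicator (hYA.inter hXB)]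
          simp [Measure.real]
  · exact (stronglyMeasurable_condExp.mono hm0X).aestronglyMeasurable

/-- Abstract main step: given `m0 ≤ mGH ≤ mX ≤ mΩ`, conditional independence of `Y, R`
given `mX`, and the key property that conditional probabilities of `Y`-events given `mX`
are a.e. equal to those given `m0`, conclude the factorization given `mGH`. -/
private theorem auxMain {Ω : Type*} (m0 mGH mX : MeasurableSpace Ω)
    {mΩ : MeasurableSpace Ω}
    (hm0GH : m0 ≤ mGH) (hGHX : mGH ≤ mX) (hXle : mX ≤ mΩ)
    (μ : Measure Ω) [IsProbabilityMeasure μ] (Y R : Ω → ℝ)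
    (hunconf : ∀ s t : Set ℝ, MeasurableSet s → MeasurableSet t →
        (μ⟦Y ⁻¹' s ∩ R ⁻¹' t | mX⟧) =ᵐ[μ]
          fun ω => (μ⟦Y ⁻¹' s | mX⟧) ω * (μ⟦R ⁻¹' t | mX⟧) ω)
    (hkey : ∀ s : Set ℝ, MeasurableSet s →
        (μ⟦Y ⁻¹' s | mX⟧) =ᵐ[μ] (μ⟦Y ⁻¹' s | m0⟧)) :
    ∀ s t : Set ℝ, MeasurableSet s → MeasurableSet t →
        (μ⟦Y ⁻¹' s ∩ R ⁻¹' t | mGH⟧) =ᵐ[μ]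
          fun ω => (μ⟦Y ⁻¹' s | mGH⟧) ω * (μ⟦R ⁻¹' t | mGH⟧) ω := by
  intro A B hA hB
  have hGHle : mGH ≤ mΩ := hGHX.trans hXle
  set cA : Ω → ℝ := μ⟦Y ⁻¹' A | m0⟧ with hcA
  have hcA_meas : StronglyMeasurable[mGH] cA := stronglyMeasurable_condExp.mono hm0GH
  have hcA_bdd : ∀ᵐ x ∂μ, ‖cA x‖ ≤ (1 : ℝ) := by
    have hb : ∀ᵐ x ∂μ, |((Y ⁻¹' A).indicator (fun _ => (1 : ℝ))) x| ≤ ((1 : ℝ≥0) : ℝ) := by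
      filter_upwards with x
      by_cases hx : x ∈ Y ⁻¹' A <;> simp [hx]
    filter_upwards [ae_bdd_condExp_of_ae_bdd (m := m0) hb] with x hx
    simpa [Real.norm_eq_abs] using hx
  have step1 : (μ⟦Y ⁻¹' A ∩ R ⁻¹' B | mGH⟧) =ᵐ[μ]
      fun x => cA x * (μ⟦R ⁻¹' B | mGH⟧) x := by
    have t1 : (μ⟦Y ⁻¹' A ∩ R ⁻¹' B | mGH⟧) =ᵐ[μ]
        μ[(μ⟦Y ⁻¹' A ∩ R ⁻¹' B | mX⟧) | mGH] :=
      (condExp_condExp_of_le hGHX hXle).symm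
    have t2 : μ[(μ⟦Y ⁻¹' A ∩ R ⁻¹' B | mX⟧) | mGH] =ᵐ[μ]
        μ[(fun x => cA x * (μ⟦R ⁻¹' B | mX⟧) x) | mGH] := by
      refine condExp_congr_ae ?_
      filter_upwards [hunconf A B hA hB, hkey A hA] with x hx1 hx2
      rw [hx1]
      simp only [Pi.mul_apply] at *
      rw [hx2]
    have hprod : Integrable (fun x => cA x * (μ⟦R ⁻¹' B | mX⟧) x) μ :=
      Integrable.bdd_mul (c := 1) integrable_condExp
        (hcA_meas.mono hGHle).aestronglyMeasurable hcA_bdd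
    have t3 : μ[(fun x => cA x * (μ⟦R ⁻¹' B | mX⟧) x) | mGH] =ᵐ[μ]
        fun x => cA x * (μ[(μ⟦R ⁻¹' B | mX⟧) | mGH]) x :=
      condExp_mul_of_stronglyMeasurable_left (μ := μ) (m := mGH)
        (f := cA) (g := μ⟦R ⁻¹' B | mX⟧) hcA_meas hprod integrable_condExp
    have t4 : (fun x => cA x * (μ[(μ⟦R ⁻¹' B | mX⟧) | mGH]) x) =ᵐ[μ]
        fun x => cA x * (μ⟦R ⁻¹' B | mGH⟧) x := by
      filter_upwards [condExp_condExp_of_le (μ := μ) hGHX hXle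
        (f := (R ⁻¹' B).indicator (fun _ => (1 : ℝ)))] with x hx
      rw [hx]
    exact ((t1.trans t2).trans t3).trans t4
  have step2 : (μ⟦Y ⁻¹' A | mGH⟧) =ᵐ[μ] cA := by
    have t1 : (μ⟦Y ⁻¹' A | mGH⟧) =ᵐ[μ] μ[(μ⟦Y ⁻¹' A | mX⟧) | mGH] :=
      (condExp_condExp_of_le hGHX hXle).symm
    have t2 : μ[(μ⟦Y ⁻¹' A | mX⟧) | mGH] =ᵐ[μ] μ[cA | mGH] :=
      condExp_congr_ae (hkey A hA)
    have t3 : μ[cA | mGH] = cA :=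
      condExp_of_stronglyMeasurable hGHle hcA_meas integrable_condExp
    exact (t1.trans t2).trans (by rw [t3])
  filter_upwards [step1, step2] with x hx1 hx2
  rw [hx1, hx2]

/-- **Prognostic-score half of Lemma 1 (double robustness of Double Score Matching)**:
if `Y` and the sample-membership indicator `R` are conditionally independent given
`σ(X)` (unconfoundedness), and `g` is a valid prognostic score in Hansen's sense
(`Y` and `X` are conditionally independent given `σ(g(X))`), then for every Borel
function `h`, `Y` and `R` are conditionally independent given `σ(g(X), h(X))`. -/
theorem condIndepFun_given_prognostic_score_and_arbitrary_function
    {Ω : Type*} {mΩ : MeasurableSpace Ω} [StandardBorelSpace Ω] [Nonempty Ω]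
    (μ : Measure Ω) [IsProbabilityMeasure μ]
    {k : ℕ} (X : Ω → (Fin k → ℝ)) (Y : Ω → ℝ) (R : Ω → ℝ)
    (hX : Measurable X) (hY : Measurable Y) (hR : Measurable R)
    (hR01 : ∀ ω, R ω = 0 ∨ R ω = 1)
    (hunconf : CondIndepFun (MeasurableSpace.comap X inferInstance) hX.comap_le Y R μ)
    (g : (Fin k → ℝ) → ℝ) (hg : Measurable g)
    (hprog : CondIndepFun (MeasurableSpace.comap (fun ω => g (X ω)) inferInstance)
      ((hg.comp hX).comap_le) Y X μ)
    (h : (Fin k → ℝ) → ℝ) (hh : Measurable h) :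
    CondIndepFun (MeasurableSpace.comap (fun ω => (g (X ω), h (X ω))) inferInstance)
      (((hg.comp hX).prodMk (hh.comp hX)).comap_le) Y R μ := by
  have hm0X : MeasurableSpace.comap (fun ω => g (X ω)) inferInstance
      ≤ MeasurableSpace.comap X inferInstance := by
    rw [show (fun ω => g (X ω)) = g ∘ X from rfl, ← MeasurableSpace.comap_comp]
    exact MeasurableSpace.comap_mono hg.comap_le
  have hm0GH : MeasurableSpace.comap (fun ω => g (X ω)) inferInstance
      ≤ MeasurableSpace.comap (fun ω => (g (X ω), h (X ω))) inferInstance := by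
    rw [show (fun ω => g (X ω)) = Prod.fst ∘ (fun ω => (g (X ω), h (X ω))) from rfl,
      ← MeasurableSpace.comap_comp]
    exact MeasurableSpace.comap_mono measurable_fst.comap_le
  have hGHX : MeasurableSpace.comap (fun ω => (g (X ω), h (X ω))) inferInstance
      ≤ MeasurableSpace.comap X inferInstance := by
    rw [show (fun ω => (g (X ω), h (X ω))) = (fun v => (g v, h v)) ∘ X from rfl,
      ← MeasurableSpace.comap_comp]
    exact MeasurableSpace.comap_mono (hg.prodMk hh).comap_le
  rw [condIndepFun_iff_condExp_inter_preimage_eq_mul hY hX] at hprog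
  rw [condIndepFun_iff_condExp_inter_preimage_eq_mul hY hR] at hunconf
  rw [condIndepFun_iff_condExp_inter_preimage_eq_mul hY hR]
  exact auxMain _ _ _ hm0GH hGHX hX.comap_le μ Y R hunconf
    (fun A hA => auxKey _ μ Y X hY hX hm0X hprog A hA)
end

section
/- Let (Ω, 𝒜, P) be a probability space, X : Ω → ℝ^k and Y : Ω → ℝ Borel-measurable random variables, and g : ℝ^k → ℝ Borel-measurable. If Y and X are conditionally independent given the σ-algebra σ(g∘X), then for every Borel-measurable h : ℝ^k → ℝ, Y and X are conditionally independent given the enlarged σ-algebra σ(g∘X, h∘X) generated by the pair (g(X), h(X)). -/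
open MeasureTheory ProbabilityTheory

set_option maxHeartbeats 1000000

/-- If `Y` and `X` are conditionally independent given a sub-σ-algebra `m1` of `σ(X)`,
then they are conditionally independent given any σ-algebra `m2` with `m1 ≤ m2 ≤ σ(X)`. -/
theorem condIndepFun_of_le_of_le_comap
    {Ω β : Type*} {m1 m2 : MeasurableSpace Ω} {mΩ : MeasurableSpace Ω}
    [StandardBorelSpace Ω] [Nonempty Ω]
    {mβ : MeasurableSpace β}
    (μ : Measure Ω) [IsProbabilityMeasure μ]
    (X : Ω → β) (Y : Ω → ℝ) (hX : Measurable X) (hY : Measurable Y)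
    (hm12 : m1 ≤ m2) (hm2X : m2 ≤ MeasurableSpace.comap X mβ)
    (hm1 : m1 ≤ mΩ) (hm2 : m2 ≤ mΩ)
    (hci : CondIndepFun m1 hm1 Y X μ) :
    CondIndepFun m2 hm2 Y X μ := by
  have hmX : MeasurableSpace.comap X mβ ≤ mΩ := hX.comap_le
  have hm1X : m1 ≤ MeasurableSpace.comap X mβ := hm12.trans hm2X
  have hind : ∀ (A : Set Ω), MeasurableSet A →
      Integrable (A.indicator (fun _ => (1:ℝ))) μ :=
    fun A hA => (integrable_const (1:ℝ)).indicator hA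
  -- key step: E[1_{Y⁻¹ s} | σ(X)] = E[1_{Y⁻¹ s} | m1]
  have key : ∀ s : Set ℝ, MeasurableSet s →
      μ[(Y ⁻¹' s).indicator (fun _ => (1:ℝ)) | m1]
        =ᵐ[μ] μ[(Y ⁻¹' s).indicator (fun _ => (1:ℝ)) | MeasurableSpace.comap X mβ] := by
    intro s hs
    set f : Ω → ℝ := (Y ⁻¹' s).indicator (fun _ => (1:ℝ)) with hfdef
    refine ae_eq_condExp_of_forall_setIntegral_eq hmX (hind _ (hY hs)) ?_ ?_ ?_
    · intro A _ _; exact integrable_condExp.integrableOn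
    · rintro A ⟨t, ht, rfl⟩ -
      set w : Ω → ℝ := (X ⁻¹' t).indicator (fun _ => (1:ℝ)) with hwdef
      have hwX : MeasurableSet (X ⁻¹' t) := hX ht
      have hfac := (condIndepFun_iff_condExp_inter_preimage_eq_mul hY hX).mp hci s t hs ht
      have hiw : Integrable w μ := hind _ hwX
      have hfw : (fun ω => f ω * w ω) = (Y ⁻¹' s ∩ X ⁻¹' t).indicator (fun _ => (1:ℝ)) := by
        funext ω
        by_cases hωs : ω ∈ Y ⁻¹' s <;> by_cases hωt : ω ∈ X ⁻¹' t <;>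
          simp [hfdef, hwdef, Set.indicator_apply, hωs, hωt]
      have hcw : Integrable (fun ω => (μ[f|m1]) ω * w ω) μ := by
        have : Integrable (fun ω => w ω * (μ[f|m1]) ω) μ :=
          integrable_condExp.bdd_mul hiw.aestronglyMeasurable
            (c := 1) (Filter.Eventually.of_forall fun ω => by
              by_cases hωt : ω ∈ X ⁻¹' t <;> simp [hwdef, Set.indicator_apply, hωt])
        simpa [mul_comm] using this
      calc ∫ ω in X ⁻¹' t, (μ[f|m1]) ω ∂μ
          = ∫ ω, (X ⁻¹' t).indicator (μ[f|m1]) ω ∂μ := (integral_indicator hwX).symm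
        _ = ∫ ω, (μ[f|m1]) ω * w ω ∂μ := by
            refine integral_congr_ae (Filter.Eventually.of_forall fun ω => ?_)
            by_cases hωt : ω ∈ X ⁻¹' t <;>
              simp [hwdef, Set.indicator_apply, hωt]
        _ = ∫ ω, (μ[fun ω => (μ[f|m1]) ω * w ω|m1]) ω ∂μ := (integral_condExp hm1).symm
        _ = ∫ ω, (μ[f|m1]) ω * (μ[w|m1]) ω ∂μ := by
            refine integral_congr_ae ?_
            have := condExp_mul_of_stronglyMeasurable_left (μ := μ) (m := m1)
              stronglyMeasurable_condExp hcw hiw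
            exact this
        _ = ∫ ω, (μ[(Y ⁻¹' s ∩ X ⁻¹' t).indicator (fun _ => (1:ℝ))|m1]) ω ∂μ :=
            (integral_congr_ae hfac).symm
        _ = ∫ ω, (Y ⁻¹' s ∩ X ⁻¹' t).indicator (fun _ => (1:ℝ)) ω ∂μ := integral_condExp hm1
        _ = ∫ ω, f ω * w ω ∂μ := by rw [hfw]
        _ = ∫ ω, (X ⁻¹' t).indicator f ω ∂μ := by
            refine integral_congr_ae (Filter.Eventually.of_forall fun ω => ?_)
            by_cases hωt : ω ∈ X ⁻¹' t <;>
              simp [hwdef, Set.indicator_apply, hωt]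
        _ = ∫ ω in X ⁻¹' t, f ω ∂μ := integral_indicator hwX
    · exact (stronglyMeasurable_condExp.mono hm1X).aestronglyMeasurable
  -- transfer to m2 via the tower property
  have key2 : ∀ s : Set ℝ, MeasurableSet s →
      μ[(Y ⁻¹' s).indicator (fun _ => (1:ℝ)) | m2]
        =ᵐ[μ] μ[(Y ⁻¹' s).indicator (fun _ => (1:ℝ)) | m1] := by
    intro s hs
    set f : Ω → ℝ := (Y ⁻¹' s).indicator (fun _ => (1:ℝ))
    calc μ[f|m2]
        =ᵐ[μ] μ[μ[f|MeasurableSpace.comap X mβ]|m2] :=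
          (condExp_condExp_of_le hm2X hmX).symm
      _ =ᵐ[μ] μ[μ[f|m1]|m2] := condExp_congr_ae (key s hs).symm
      _ =ᵐ[μ] μ[f|m1] := by
          rw [condExp_of_stronglyMeasurable hm2 (stronglyMeasurable_condExp.mono hm12)
            integrable_condExp]
  rw [condIndepFun_iff_condExp_inter_preimage_eq_mul hY hX]
  intro s t hs ht
  set f : Ω → ℝ := (Y ⁻¹' s).indicator (fun _ => (1:ℝ)) with hfdef
  set w : Ω → ℝ := (X ⁻¹' t).indicator (fun _ => (1:ℝ)) with hwdef
  have hwX : MeasurableSet (X ⁻¹' t) := hX ht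
  have hiw : Integrable w μ := hind _ hwX
  have hif : Integrable f μ := hind _ (hY hs)
  have hwbd : ∃ C, ∀ ω, ‖w ω‖ ≤ C :=
    ⟨1, fun ω => by by_cases hωt : ω ∈ X ⁻¹' t <;> simp [hwdef, Set.indicator_apply, hωt]⟩
  have hwmX : StronglyMeasurable[MeasurableSpace.comap X mβ] w :=
    stronglyMeasurable_const.indicator ⟨t, ht, rfl⟩
  have hfw : (fun ω => w ω * f ω) = (Y ⁻¹' s ∩ X ⁻¹' t).indicator (fun _ => (1:ℝ)) := by
    funext ω
    by_cases hωs : ω ∈ Y ⁻¹' s <;> by_cases hωt : ω ∈ X ⁻¹' t <;>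
      simp [hfdef, hwdef, Set.indicator_apply, hωs, hωt]
  have hifw : Integrable (fun ω => w ω * f ω) μ := by
    rw [hfw]; exact hind _ ((hY hs).inter hwX)
  have hfX2 : μ[f|MeasurableSpace.comap X mβ] =ᵐ[μ] μ[f|m2] :=
    (key s hs).symm.trans (key2 s hs).symm
  have hc2 : Integrable (fun ω => (μ[f|m2]) ω * w ω) μ := by
    have : Integrable (fun ω => w ω * (μ[f|m2]) ω) μ :=
      integrable_condExp.bdd_mul hiw.aestronglyMeasurable (Filter.Eventually.of_forall hwbd.choose_spec)
    simpa [mul_comm] using this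
  calc μ[(Y ⁻¹' s ∩ X ⁻¹' t).indicator (fun _ => (1:ℝ))|m2]
      =ᵐ[μ] μ[μ[(Y ⁻¹' s ∩ X ⁻¹' t).indicator (fun _ => (1:ℝ))|MeasurableSpace.comap X mβ]|m2] :=
        (condExp_condExp_of_le hm2X hmX).symm
    _ =ᵐ[μ] μ[fun ω => (μ[f|m2]) ω * w ω|m2] := by
        refine condExp_congr_ae ?_
        have h1 : μ[(Y ⁻¹' s ∩ X ⁻¹' t).indicator (fun _ => (1:ℝ))|MeasurableSpace.comap X mβ]
            =ᵐ[μ] μ[fun ω => w ω * f ω|MeasurableSpace.comap X mβ] := by rw [hfw]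
        have h2 : μ[fun ω => w ω * f ω|MeasurableSpace.comap X mβ]
            =ᵐ[μ] fun ω => w ω * (μ[f|MeasurableSpace.comap X mβ]) ω := by
          have := condExp_mul_of_stronglyMeasurable_left (μ := μ)
            (m := MeasurableSpace.comap X mβ) hwmX hifw hif
          exact this
        refine (h1.trans h2).trans ?_
        filter_upwards [hfX2] with ω hω
        rw [hω, mul_comm]
    _ =ᵐ[μ] fun ω => (μ[f|m2]) ω * (μ[w|m2]) ω := by
        have := condExp_mul_of_stronglyMeasurable_left (μ := μ) (m := m2)
          stronglyMeasurable_condExp hc2 hiw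
        exact this

/-- **Coarsening/enlargement property of balance scores** (key step in the proof of
Lemma 1): if `Y` and `X` are conditionally independent given `σ(g(X))`, then for every
Borel function `h`, `Y` and `X` remain conditionally independent given the enlarged
σ-algebra `σ(g(X), h(X))`. -/
theorem condIndepFun_enlarge_by_function_of_covariates
    {Ω : Type*} {mΩ : MeasurableSpace Ω} [StandardBorelSpace Ω] [Nonempty Ω]
    (μ : Measure Ω) [IsProbabilityMeasure μ]
    {k : ℕ} (X : Ω → (Fin k → ℝ)) (Y : Ω → ℝ)
    (hX : Measurable X) (hY : Measurable Y)
    (g : (Fin k → ℝ) → ℝ) (hg : Measurable g)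
    (hgscore : CondIndepFun (MeasurableSpace.comap (fun ω => g (X ω)) inferInstance)
      ((hg.comp hX).comap_le) Y X μ)
    (h : (Fin k → ℝ) → ℝ) (hh : Measurable h) :
    CondIndepFun (MeasurableSpace.comap (fun ω => (g (X ω), h (X ω))) inferInstance)
      (((hg.comp hX).prodMk (hh.comp hX)).comap_le) Y X μ := by
  refine condIndepFun_of_le_of_le_comap μ X Y hX hY ?_ ?_ _ _ hgscore
  · have heq : (fun ω => g (X ω)) = Prod.fst ∘ (fun ω => (g (X ω), h (X ω))) := rfl
    rw [heq, ← MeasurableSpace.comap_comp]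
    exact MeasurableSpace.comap_mono measurable_fst.comap_le
  · have heq : (fun ω => (g (X ω), h (X ω))) = (fun x => (g x, h x)) ∘ X := rfl
    rw [heq, ← MeasurableSpace.comap_comp]
    exact MeasurableSpace.comap_mono (hg.prodMk hh).comap_le
end

section
/- Let A and B be nonempty finite sets, M a positive natural number, J : B → Finset A with |J(i)| = M for all i ∈ B. Let m : A ∪ B → ℝ (conditional-mean values E[y|z]), ε : A → ℝ (residuals), and y : A → ℝ with y(j) = m(j) + ε(j) for all j ∈ A. Let K(j) = |{i ∈ B : j ∈ J(i)}|, and let μ ∈ ℝ be arbitrary. Then the imputed-mean error decomposes exactly as: (1/|B|)·Σ_{i∈B}(1/M)·Σ_{j∈J(i)} y(j) − μ = [ (1/|B|)·Σ_{i∈B} m(i) − μ ] + (1/|B|)·Σ_{j∈A} (K(j)/M)·ε(j) + (1/|B|)·Σ_{i∈B}(1/M)·Σ_{j∈J(i)} ( m(j) − m(i) ). -/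
open Finset

/-- **Exact three-term decomposition of the DSM imputed-mean error** (equations 9–12):
score-heterogeneity term, conditional-residual term written with matching multiplicities
`K j`, and the matching-discrepancy (bias) term. Here `m` gives the conditional-mean values
`E[y|z]` on the disjoint union of the nonprobability sample `A` and the probability sample
`B`, and `ε` the residuals on `A`, with `y j = m j + ε j`. -/
theorem dsm_error_decomposition
    {A B : Type*} [Fintype A] [Fintype B] [Nonempty A] [Nonempty B] [DecidableEq A]
    (M : ℕ) (hM : 0 < M) (J : B → Finset A) (hJ : ∀ i, (J i).card = M)
    (m : A ⊕ B → ℝ) (ε : A → ℝ) (y : A → ℝ)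
    (hy : ∀ j : A, y j = m (Sum.inl j) + ε j) (μ : ℝ) :
    (1 / (Fintype.card B : ℝ)) * (∑ i : B, (1 / (M : ℝ)) * ∑ j ∈ J i, y j) - μ
      = ((1 / (Fintype.card B : ℝ)) * ∑ i : B, m (Sum.inr i) - μ)
        + (1 / (Fintype.card B : ℝ)) * ∑ j : A,
            (((Finset.univ.filter fun i : B => j ∈ J i).card : ℝ) / (M : ℝ)) * ε j
        + (1 / (Fintype.card B : ℝ)) * ∑ i : B, (1 / (M : ℝ)) *
            ∑ j ∈ J i, (m (Sum.inl j) - m (Sum.inr i)) := by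
  have key : ∑ i : B, ∑ j ∈ J i, ε j
      = ∑ j : A, ((Finset.univ.filter fun i : B => j ∈ J i).card : ℝ) * ε j := by
    have h1 : ∀ i : B, ∑ j ∈ J i, ε j = ∑ j : A, if j ∈ J i then ε j else 0 := by
      intro i
      rw [Finset.sum_ite_mem, Finset.univ_inter]
    simp_rw [h1]
    rw [Finset.sum_comm]
    refine Finset.sum_congr rfl fun j _ => ?_
    rw [← Finset.sum_filter, Finset.sum_const, nsmul_eq_mul]
  have hMne : (M : ℝ) ≠ 0 := Nat.cast_ne_zero.mpr hM.ne'
  simp_rw [hy, Finset.sum_add_distrib, Finset.sum_sub_distrib, Finset.sum_const, hJ,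
    nsmul_eq_mul, div_eq_mul_inv, one_mul]
  simp_rw [mul_sub, mul_add, Finset.sum_add_distrib, Finset.sum_sub_distrib, ← Finset.mul_sum]
  have h2 : ∑ x : A, ((Finset.univ.filter fun i : B => x ∈ J i).card : ℝ) * ((M : ℝ))⁻¹ * ε x
      = ((M : ℝ))⁻¹ * ∑ x : A, ((Finset.univ.filter fun i : B => x ∈ J i).card : ℝ) * ε x := by
    rw [Finset.mul_sum]; exact Finset.sum_congr rfl fun x _ => by ring
  rw [h2, ← key]
  field_simp
  ring
end

section
/- Let U_1, …, U_n be i.i.d. real-valued random variables whose common law is absolutely continuous with density f with respect to Lebesgue measure and cumulative distribution function F, and let 1 ≤ m ≤ n − 1. Then for every u ≥ 0, P( U_{(m+1)} − U_{(m)} ≤ u ) ≤ ∫_ℝ b_{nm} · f(x) · ( F(x + u) − F(x) ) dx, where U_{(m)} denotes the m-th order statistic and b_{nm} = n! / ( (m−1)! · (n−m−1)! ). -/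
open MeasureTheory ProbabilityTheory

/-- The `m`-th order statistic (0-indexed: `orderStat v m` is the `(m+1)`-th smallest
value) of the finite family `v : Fin n → ℝ`. -/
noncomputable def orderStat {n : ℕ} (v : Fin n → ℝ) (m : Fin n) : ℝ :=
  (Multiset.sort (Multiset.map v Finset.univ.val) (· ≤ ·)).get ⟨m.1, by simp⟩

lemma exists_pair_orderStat {n : ℕ} (v : Fin n → ℝ) (k : ℕ) (hk : k + 1 < n) :
    ∃ i j : Fin n, i ≠ j ∧ v i = orderStat v ⟨k, by omega⟩ ∧
      v j = orderStat v ⟨k + 1, hk⟩ ∧ v i ≤ v j := by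
  classical
  set L := Multiset.sort (Multiset.map v Finset.univ.val) (· ≤ ·) with hLdef
  have hlen : L.length = n := by simp [hLdef]
  set a := orderStat v ⟨k, by omega⟩ with ha
  set b := orderStat v ⟨k + 1, hk⟩ with hb
  have hdrop1 : L.drop k = a :: L.drop (k + 1) := by
    rw [List.drop_eq_getElem_cons (by omega)]; rfl
  have hdrop2 : L.drop (k + 1) = b :: L.drop (k + 2) := by
    rw [List.drop_eq_getElem_cons (by omega)]; rfl
  have hsorted : L.Pairwise (· ≤ ·) := Multiset.pairwise_sort _ _
  have hab : a ≤ b := by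
    have h1 : (L.drop k).Pairwise (· ≤ ·) := hsorted.sublist (List.drop_sublist _ _)
    rw [hdrop1, hdrop2] at h1
    exact (List.pairwise_cons.mp h1).1 b List.mem_cons_self
  have hpair : (a ::ₘ b ::ₘ 0) ≤ Multiset.map v Finset.univ.val := by
    have h2 : ((a :: b :: L.drop (k + 2) : List ℝ) : Multiset ℝ) ≤ (L : Multiset ℝ) := by
      refine List.Sublist.subperm ?_
      rw [← hdrop2, ← hdrop1]
      exact List.drop_sublist _ _
    have h3 : (a ::ₘ b ::ₘ 0) ≤ ((a :: b :: L.drop (k + 2) : List ℝ) : Multiset ℝ) := by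
      rw [show ((a :: b :: L.drop (k + 2) : List ℝ) : Multiset ℝ)
          = a ::ₘ b ::ₘ (L.drop (k + 2) : Multiset ℝ) from rfl]
      exact Multiset.cons_le_cons _ (Multiset.cons_le_cons _ (Multiset.zero_le _))
    calc (a ::ₘ b ::ₘ 0) ≤ _ := h3
      _ ≤ (L : Multiset ℝ) := h2
      _ = Multiset.map v Finset.univ.val := by rw [hLdef]; exact Multiset.sort_eq _ _
  have hamem : a ∈ Multiset.map v Finset.univ.val :=
    Multiset.mem_of_le hpair (by simp)
  obtain ⟨i, -, hi⟩ := Multiset.mem_map.mp hamem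
  have hsplit : Multiset.map v Finset.univ.val
      = v i ::ₘ Multiset.map v (Finset.univ.val.erase i) := by
    rw [← Multiset.map_cons, Multiset.cons_erase (by simp : i ∈ Finset.univ.val)]
  have hbmem : b ∈ Multiset.map v (Finset.univ.val.erase i) := by
    have := Multiset.erase_le_erase a hpair
    rw [hsplit, hi] at this
    rw [Multiset.erase_cons_head, Multiset.erase_cons_head] at this
    exact Multiset.mem_of_le this (by simp)
  obtain ⟨j, hjmem, hj⟩ := Multiset.mem_map.mp hbmem
  refine ⟨i, j, ?_, hi, hj, by rw [hi, hj]; exact hab⟩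
  intro hij
  exact Multiset.Nodup.notMem_erase Finset.univ.nodup (hij ▸ hjmem)

/-- **Result 1 of the appendix**: if `U_1, …, U_n` are i.i.d. with density `f` and CDF
`F`, and `1 ≤ m ≤ n − 1`, then for every `u ≥ 0` the distribution function of the gap
between consecutive order statistics is bounded:
`P(U_{(m+1)} − U_{(m)} ≤ u) ≤ ∫ b_{nm} f(x) (F(x + u) − F(x)) dx`,
where `b_{nm} = n! / ((m−1)! (n−m−1)!)`. -/
theorem gap_consecutive_order_statistics_cdf_le
    {Ω : Type*} [MeasurableSpace Ω] (μ : Measure Ω) [IsProbabilityMeasure μ]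
    (n m : ℕ) (hm1 : 1 ≤ m) (hmn : m ≤ n - 1)
    (U : Fin n → Ω → ℝ) (hUmeas : ∀ i, Measurable (U i))
    (hindep : iIndepFun U μ)
    (f : ℝ → ℝ) (hfmeas : Measurable f) (hfnonneg : ∀ x, 0 ≤ f x)
    (hlaw : ∀ i, Measure.map (U i) μ
      = (volume : Measure ℝ).withDensity fun x => ENNReal.ofReal (f x))
    (F : ℝ → ℝ) (hF : F = fun x => ∫ t in Set.Iic x, f t) :
    ∀ u : ℝ, 0 ≤ u →
      (μ {ω | orderStat (fun i => U i ω) ⟨m, by omega⟩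
          - orderStat (fun i => U i ω) ⟨m - 1, by omega⟩ ≤ u}).toReal
        ≤ ∫ x : ℝ, (n.factorial : ℝ) / ((m - 1).factorial * (n - m - 1).factorial)
            * f x * (F (x + u) - F x) := by
  intro u hu
  have hn2 : 2 ≤ n := by omega
  set ν : Measure ℝ := (volume : Measure ℝ).withDensity (fun x => ENNReal.ofReal (f x)) with hν
  have hνprob : IsProbabilityMeasure ν := by
    rw [← hlaw ⟨0, by omega⟩]
    exact Measure.isProbabilityMeasure_map (hUmeas _).aemeasurable
  -- integrability of f
  have hnn : ∀ x : ℝ, ‖f x‖ₑ = ENNReal.ofReal (f x) := fun x => by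
    exact Real.enorm_eq_ofReal (hfnonneg x)
  have hfint : Integrable f (volume : Measure ℝ) := by
    refine ⟨hfmeas.aestronglyMeasurable, ?_⟩
    rw [HasFiniteIntegral]
    simp_rw [hnn]
    have h1 := hνprob.measure_univ
    rw [hν, withDensity_apply _ MeasurableSet.univ, Measure.restrict_univ] at h1
    simp [h1]
  -- facts about F
  have hFmono : Monotone F := by
    intro s t hst
    rw [hF]
    exact setIntegral_mono_set hfint.integrableOn (ae_of_all _ hfnonneg)
      (HasSubset.Subset.eventuallyLE (Set.Iic_subset_Iic.mpr hst))
  have hFmeas : Measurable F := hFmono.measurable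
  have hGmeas : Measurable (fun x => F (x + u) - F x) :=
    (hFmeas.comp (measurable_id.add_const u)).sub hFmeas
  have hGnonneg : ∀ x : ℝ, 0 ≤ F (x + u) - F x :=
    fun x => sub_nonneg.mpr (hFmono (by linarith))
  have hFdiff : ∀ x : ℝ, F (x + u) - F x = ∫ t in Set.Ioc x (x + u), f t := by
    intro x
    rw [hF]
    simp only
    rw [intervalIntegral.integral_Iic_sub_Iic hfint.integrableOn hfint.integrableOn,
      intervalIntegral.integral_of_le (by linarith)]
  -- ν of intervals
  have hIcc : ∀ x : ℝ, ν (Set.Icc x (x + u)) = ENNReal.ofReal (F (x + u) - F x) := by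
    intro x
    have hsing : ν {x} = 0 :=
      (withDensity_absolutelyContinuous _ _) (Real.volume_singleton)
    have h0 : ν (Set.Icc x (x + u)) = ν (Set.Ioc x (x + u)) := by
      refine le_antisymm ?_ (measure_mono Set.Ioc_subset_Icc_self)
      calc ν (Set.Icc x (x + u)) ≤ ν ({x} ∪ Set.Ioc x (x + u)) := by
            refine measure_mono ?_
            intro y hy
            rcases eq_or_lt_of_le hy.1 with h | h
            · exact Or.inl (by simp [← h])
            · exact Or.inr ⟨h, hy.2⟩
        _ ≤ ν {x} + ν (Set.Ioc x (x + u)) := measure_union_le _ _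
        _ = ν (Set.Ioc x (x + u)) := by rw [hsing, zero_add]
    rw [h0, hν, withDensity_apply _ measurableSet_Ioc,
      ← MeasureTheory.ofReal_integral_eq_lintegral_ofReal hfint.integrableOn
        (ae_of_all _ hfnonneg), hFdiff]
  -- the pair event
  set S : Set (ℝ × ℝ) := {p | p.1 ≤ p.2 ∧ p.2 ≤ p.1 + u} with hSdef
  have hSmeas : MeasurableSet S :=
    (measurableSet_le measurable_fst measurable_snd).inter
      (measurableSet_le measurable_snd (measurable_fst.add_const u))
  set K := (ν.prod ν) S with hKdef
  have hAij : ∀ i j : Fin n, i ≠ j → μ ((fun ω => (U i ω, U j ω)) ⁻¹' S) = K := by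
    intro i j hij
    have hmap : μ.map (fun ω => (U i ω, U j ω)) = ν.prod ν := by
      have h := (indepFun_iff_map_prod_eq_prod_map_map (hUmeas i).aemeasurable
        (hUmeas j).aemeasurable).mp (hindep.indepFun hij)
      rw [hlaw i, hlaw j] at h
      exact h
    rw [← Measure.map_apply ((hUmeas i).prodMk (hUmeas j)) hSmeas, hmap]
  -- inclusion of the event in a finite union
  have hsub : {ω | orderStat (fun i => U i ω) ⟨m, by omega⟩
          - orderStat (fun i => U i ω) ⟨m - 1, by omega⟩ ≤ u}
      ⊆ ⋃ p ∈ (Finset.univ.offDiag : Finset (Fin n × Fin n)),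
          ((fun ω => (U p.1 ω, U p.2 ω)) ⁻¹' S) := by
    intro ω hω
    obtain ⟨i, j, hij, hvi, hvj, hvij⟩ :=
      exists_pair_orderStat (fun i => U i ω) (m - 1) (by omega)
    have hm' : (⟨m - 1 + 1, by omega⟩ : Fin n) = ⟨m, by omega⟩ := by
      apply Fin.ext; simp; omega
    rw [hm'] at hvj
    refine Set.mem_biUnion (s := (Finset.univ.offDiag : Finset (Fin n × Fin n)))
      (show ((i, j) : Fin n × Fin n) ∈ _ from
        Finset.mem_offDiag.mpr ⟨Finset.mem_univ _, Finset.mem_univ _, hij⟩) ?_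
    have hω' : orderStat (fun i => U i ω) ⟨m, by omega⟩
        - orderStat (fun i => U i ω) ⟨m - 1, by omega⟩ ≤ u := hω
    exact ⟨hvij, by dsimp only; rw [hvi, hvj]; linarith⟩
  -- summing
  have hcard : (Finset.univ.offDiag : Finset (Fin n × Fin n)).card = n * n - n := by
    rw [Finset.offDiag_card]; simp
  have hμev : μ {ω | orderStat (fun i => U i ω) ⟨m, by omega⟩
          - orderStat (fun i => U i ω) ⟨m - 1, by omega⟩ ≤ u}
        ≤ ((n * n - n : ℕ) : ENNReal) * K := by
    calc μ _ ≤ μ (⋃ p ∈ (Finset.univ.offDiag : Finset (Fin n × Fin n)),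
          ((fun ω => (U p.1 ω, U p.2 ω)) ⁻¹' S)) := measure_mono hsub
      _ ≤ ∑ p ∈ (Finset.univ.offDiag : Finset (Fin n × Fin n)),
            μ ((fun ω => (U p.1 ω, U p.2 ω)) ⁻¹' S) := measure_biUnion_finset_le _ _
      _ = ∑ p ∈ (Finset.univ.offDiag : Finset (Fin n × Fin n)), K := by
          refine Finset.sum_congr rfl fun p hp => ?_
          exact hAij p.1 p.2 (Finset.mem_offDiag.mp hp).2.2
      _ = ((n * n - n : ℕ) : ENNReal) * K := by
          rw [Finset.sum_const, hcard, nsmul_eq_mul]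
  -- computing K
  have hprodprob : IsProbabilityMeasure (ν.prod ν) := by infer_instance
  have hKle1 : K ≤ 1 := by
    rw [hKdef, ← hprodprob.measure_univ]
    exact measure_mono (Set.subset_univ _)
  have hKlint : K = ∫⁻ x : ℝ, ENNReal.ofReal (f x * (F (x + u) - F x)) ∂volume := by
    rw [hKdef, Measure.prod_apply hSmeas]
    have h1 : ∀ x : ℝ, (Prod.mk x ⁻¹' S) = Set.Icc x (x + u) := fun x => rfl
    simp_rw [h1, hIcc]
    rw [hν, lintegral_withDensity_eq_lintegral_mul _ hfmeas.ennreal_ofReal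
      hGmeas.ennreal_ofReal]
    congr 1
    funext x
    simp only [Pi.mul_apply]
    rw [← ENNReal.ofReal_mul (hfnonneg x)]
  have hKtoReal : K.toReal = ∫ x : ℝ, f x * (F (x + u) - F x) := by
    rw [hKlint, ← integral_eq_lintegral_of_nonneg_ae
      (ae_of_all _ fun x => mul_nonneg (hfnonneg x) (hGnonneg x))
      (hfmeas.mul hGmeas).aestronglyMeasurable]
  -- the constant
  have hd : (m - 1).factorial * (n - m - 1).factorial ≤ (n - 2).factorial := by
    have h1 : (m - 1) + (n - m - 1) = n - 2 := by omega
    refine Nat.le_of_dvd (Nat.factorial_pos _) ?_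
    rw [← h1]
    exact Nat.factorial_mul_factorial_dvd_factorial_add _ _
  have hnf : n.factorial = (n * n - n) * (n - 2).factorial := by
    obtain ⟨k, rfl⟩ : ∃ k, n = k + 2 := ⟨n - 2, by omega⟩
    have h2 : (k + 2) * (k + 2) - (k + 2) = (k + 2) * (k + 1) := by
      have : (k + 2) * (k + 2) = (k + 2) * (k + 1) + (k + 2) := by ring
      omega
    rw [h2]
    simp [Nat.factorial_succ]
    ring
  set b : ℝ := (n.factorial : ℝ) / ((m - 1).factorial * (n - m - 1).factorial) with hbdef
  have hbge : ((n * n - n : ℕ) : ℝ) ≤ b := by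
    rw [hbdef, le_div_iff₀ (by positivity)]
    have : (n * n - n) * ((m - 1).factorial * (n - m - 1).factorial) ≤ n.factorial := by
      rw [hnf]
      exact Nat.mul_le_mul_left _ hd
    exact_mod_cast this
  -- final chain
  have hRHS : (∫ x : ℝ, b * f x * (F (x + u) - F x))
      = b * ∫ x : ℝ, f x * (F (x + u) - F x) := by
    simp_rw [mul_assoc]
    exact integral_const_mul b _
  rw [hRHS, ← hKtoReal]
  calc (μ _).toReal ≤ (((n * n - n : ℕ) : ENNReal) * K).toReal := by
        refine ENNReal.toReal_mono ?_ hμev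
        exact ENNReal.mul_ne_top (ENNReal.natCast_ne_top _)
          (lt_of_le_of_lt hKle1 (by simp)).ne
    _ = ((n * n - n : ℕ) : ℝ) * K.toReal := by
        rw [ENNReal.toReal_mul, ENNReal.toReal_natCast]
    _ ≤ b * K.toReal := mul_le_mul_of_nonneg_right hbge ENNReal.toReal_nonneg
end
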